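/- (Bekić principle, least fixed points.) Let A₁ and A₂ be complete lattices and let f₁ : A₁ × A₂ → A₁ and f₂ : A₁ × A₂ → A₂ be monotone (with respect to the product order). Then the least fixed point of the monotone map F : A₁ × A₂ → A₁ × A₂ given by F(x₁,x₂) = (f₁(x₁,x₂), f₂(x₁,x₂)) equals the pair ( lfp (x₁ ↦ f₁(x₁, lfp (x₂ ↦ f₂(x₁,x₂)))), lfp (x₂ ↦ f₂(lfp (x₁ ↦ f₁(x₁,x₂)), x₂)) ), where all the displayed single-variable maps are monotone and lfp denotes the least fixed point given by the Knaster–Tarski theorem. -/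

import Mathlib

section Bekic

variable {A₁ A₂ : Type*} [CompleteLattice A₁] [CompleteLattice A₂]

/-- The monotone map `F (x₁, x₂) = (f₁ (x₁, x₂), f₂ (x₁, x₂))` on the product lattice. -/
def pairHom (f₁ : A₁ × A₂ →o A₁) (f₂ : A₁ × A₂ →o A₂) : A₁ × A₂ →o A₁ × A₂ :=
  ⟨fun p => (f₁ p, f₂ p), fun _ _ h => ⟨f₁.mono h, f₂.mono h⟩⟩

/-- For fixed `x₁`, the monotone map `x₂ ↦ f₂ (x₁, x₂)`. -/
def secHom₂ (f₂ : A₁ × A₂ →o A₂) (x₁ : A₁) : A₂ →o A₂ :=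
  ⟨fun x₂ => f₂ (x₁, x₂), fun _ _ h => f₂.mono ⟨le_rfl, h⟩⟩

/-- For fixed `x₂`, the monotone map `x₁ ↦ f₁ (x₁, x₂)`. -/
def secHom₁ (f₁ : A₁ × A₂ →o A₁) (x₂ : A₂) : A₁ →o A₁ :=
  ⟨fun x₁ => f₁ (x₁, x₂), fun _ _ h => f₁.mono ⟨h, le_rfl⟩⟩

/-- The monotone map `x₁ ↦ f₁ (x₁, lfp (x₂ ↦ f₂ (x₁, x₂)))`. -/
def bekicFst (f₁ : A₁ × A₂ →o A₁) (f₂ : A₁ × A₂ →o A₂) : A₁ →o A₁ :=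
  ⟨fun x₁ => f₁ (x₁, OrderHom.lfp (secHom₂ f₂ x₁)), by
    intro a b h
    exact f₁.mono ⟨h, OrderHom.lfp.mono (fun x₂ => f₂.mono ⟨h, le_rfl⟩)⟩⟩

/-- The monotone map `x₂ ↦ f₂ (lfp (x₁ ↦ f₁ (x₁, x₂)), x₂)`. -/
def bekicSnd (f₁ : A₁ × A₂ →o A₁) (f₂ : A₁ × A₂ →o A₂) : A₂ →o A₂ :=
  ⟨fun x₂ => f₂ (OrderHom.lfp (secHom₁ f₁ x₂), x₂), by
    intro a b h
    exact f₂.mono ⟨OrderHom.lfp.mono (fun x₁ => f₁.mono ⟨le_rfl, h⟩), h⟩⟩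

lemma bekic_lfp_fst (f₁ : A₁ × A₂ →o A₁) (f₂ : A₁ × A₂ →o A₂) :
    OrderHom.lfp (pairHom f₁ f₂) =
      (OrderHom.lfp (bekicFst f₁ f₂),
       OrderHom.lfp (secHom₂ f₂ (OrderHom.lfp (bekicFst f₁ f₂)))) := by
  set a := OrderHom.lfp (bekicFst f₁ f₂) with ha
  set b := OrderHom.lfp (secHom₂ f₂ a) with hb
  have hfixb : f₂ (a, b) = b := OrderHom.map_lfp (secHom₂ f₂ a)
  have hfixa : f₁ (a, b) = a := OrderHom.map_lfp (bekicFst f₁ f₂)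
  have hfix : pairHom f₁ f₂ (a, b) = (a, b) := Prod.ext hfixa hfixb
  apply le_antisymm
  · exact OrderHom.lfp_le _ (le_of_eq hfix)
  · set pq := OrderHom.lfp (pairHom f₁ f₂) with hpq
    have hfpq : pairHom f₁ f₂ pq = pq := OrderHom.map_lfp (pairHom f₁ f₂)
    have h1 : f₁ pq = pq.1 := congrArg Prod.fst hfpq
    have h2 : f₂ pq = pq.2 := congrArg Prod.snd hfpq
    have hq : OrderHom.lfp (secHom₂ f₂ pq.1) ≤ pq.2 :=
      OrderHom.lfp_le _ (by exact le_of_eq h2)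
    have hap : a ≤ pq.1 :=
      OrderHom.lfp_le _ (by
        calc bekicFst f₁ f₂ pq.1 = f₁ (pq.1, OrderHom.lfp (secHom₂ f₂ pq.1)) := rfl
          _ ≤ f₁ pq := f₁.mono ⟨le_rfl, hq⟩
          _ = pq.1 := h1)
    have hbq : b ≤ pq.2 :=
      le_trans (OrderHom.lfp.mono (show secHom₂ f₂ a ≤ secHom₂ f₂ pq.1 from fun x₂ => f₂.mono ⟨hap, le_rfl⟩)) hq
    exact ⟨hap, hbq⟩

lemma bekic_lfp_snd (f₁ : A₁ × A₂ →o A₁) (f₂ : A₁ × A₂ →o A₂) :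
    OrderHom.lfp (pairHom f₁ f₂) =
      (OrderHom.lfp (secHom₁ f₁ (OrderHom.lfp (bekicSnd f₁ f₂))),
       OrderHom.lfp (bekicSnd f₁ f₂)) := by
  set b := OrderHom.lfp (bekicSnd f₁ f₂) with hbdef
  set a := OrderHom.lfp (secHom₁ f₁ b) with hadef
  have hfixa : f₁ (a, b) = a := OrderHom.map_lfp (secHom₁ f₁ b)
  have hfixb : f₂ (a, b) = b := OrderHom.map_lfp (bekicSnd f₁ f₂)
  have hfix : pairHom f₁ f₂ (a, b) = (a, b) := Prod.ext hfixa hfixb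
  apply le_antisymm
  · exact OrderHom.lfp_le _ (le_of_eq hfix)
  · set pq := OrderHom.lfp (pairHom f₁ f₂) with hpq
    have hfpq : pairHom f₁ f₂ pq = pq := OrderHom.map_lfp (pairHom f₁ f₂)
    have h1 : f₁ pq = pq.1 := congrArg Prod.fst hfpq
    have h2 : f₂ pq = pq.2 := congrArg Prod.snd hfpq
    have hp : OrderHom.lfp (secHom₁ f₁ pq.2) ≤ pq.1 :=
      OrderHom.lfp_le _ (by exact le_of_eq h1)
    have hbq : b ≤ pq.2 :=
      OrderHom.lfp_le _ (by
        calc bekicSnd f₁ f₂ pq.2 = f₂ (OrderHom.lfp (secHom₁ f₁ pq.2), pq.2) := rfl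
          _ ≤ f₂ pq := f₂.mono ⟨hp, le_rfl⟩
          _ = pq.2 := h2)
    have hap : a ≤ pq.1 :=
      le_trans (OrderHom.lfp.mono (show secHom₁ f₁ b ≤ secHom₁ f₁ pq.2 from fun x₁ => f₁.mono ⟨le_rfl, hbq⟩)) hp
    exact ⟨hap, hbq⟩

/-- **Bekić principle** for least fixed points. -/
theorem bekic_lfp (f₁ : A₁ × A₂ →o A₁) (f₂ : A₁ × A₂ →o A₂) :
    OrderHom.lfp (pairHom f₁ f₂) =
      (OrderHom.lfp (bekicFst f₁ f₂), OrderHom.lfp (bekicSnd f₁ f₂)) := by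
  ext
  · rw [bekic_lfp_fst]
  · rw [bekic_lfp_snd]

end Bekic
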